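/- For every n >= 8 with 4 dividing n, the generalized Petersen graph GP(n,3) admits a perfect 2-coloring with parameter matrix [[0,3],[1,2]]; explicitly, the map T with T(a_{4i}) = T(b_{4i+2}) = 1 and T of all other vertices equal to 2 is such a coloring. -/
import Mathlib


/-- The generalized Petersen graph `GP n k`. Vertices are pairs `(s, i)` with
`s : Bool` (`false` = outer vertex `aᵢ`, `true` = inner vertex `bᵢ`) and `i : ZMod n`.
Edges: `aᵢ aᵢ₊₁`, `aᵢ bᵢ`, `bᵢ bᵢ₊ₖ`. -/
def GP (n k : ℕ) : SimpleGraph (Bool × ZMod n) :=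
  SimpleGraph.fromRel (fun v w =>
    (v.1 = false ∧ w.1 = false ∧ w.2 = v.2 + 1) ∨
    (v.1 = false ∧ w.1 = true ∧ w.2 = v.2) ∨
    (v.1 = true ∧ w.1 = true ∧ w.2 = v.2 + (k : ZMod n)))

/-- `T` is a perfect 2-coloring of `G` with parameter matrix `A`:
`T` is surjective onto the two colors (color `0` = white = "1", color `1` = black = "2"),
and every vertex of color `i` has exactly `A i j` neighbors of color `j`. -/
def IsPerfectColoring {V : Type*} (G : SimpleGraph V) (T : V → Fin 2)
    (A : Matrix (Fin 2) (Fin 2) ℕ) : Prop :=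
  Function.Surjective T ∧
  ∀ v : V, ∀ j : Fin 2, {w | G.Adj v w ∧ T w = j}.ncard = A (T v) j

/-- Counting a 2-colored 3-element set: the number of elements of color `j` among
three pairwise distinct elements is the sum of indicators. -/
lemma count3 {α : Type*} [DecidableEq α] (P : α → Prop) (T : α → Fin 2) (x y z : α)
    (hP : ∀ w, P w ↔ w = x ∨ w = y ∨ w = z) (hxy : x ≠ y) (hxz : x ≠ z) (hyz : y ≠ z) (j : Fin 2) :
    {w | P w ∧ T w = j}.ncard =
      (if T x = j then 1 else 0) + (if T y = j then 1 else 0) + (if T z = j then 1 else 0) := by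
  have hset : {w | P w ∧ T w = j} = (({x, y, z} : Finset α).filter (fun w => T w = j) : Set α) := by
    ext w; simp [hP]
  rw [hset, Set.ncard_coe_finset, Finset.card_filter]
  rw [Finset.sum_insert (by simp [hxy, hxz]), Finset.sum_insert (by simp [hyz]),
    Finset.sum_singleton]
  omega

/-- When `4 ∣ n`, shifting an element of `ZMod n` by a natural number shifts its
value mod 4 accordingly. -/
lemma zmod_shift (n : ℕ) [NeZero n] (h4 : 4 ∣ n) (i : ZMod n) (c : ℕ) :
    (i + (c : ZMod n)).val % 4 = (i.val + c) % 4 := by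
  rw [ZMod.val_add, Nat.mod_mod_of_dvd _ h4, Nat.add_mod, ZMod.val_natCast,
    Nat.mod_mod_of_dvd _ h4, ← Nat.add_mod]

/-- Neighbors of an outer vertex `aᵢ` in `GP n 3`. -/
lemma adj_false {n : ℕ} (i : ZMod n) (d1 : i + 1 ≠ i) (d2 : i - 1 ≠ i) (w : Bool × ZMod n) :
    (GP n 3).Adj (false, i) w ↔ w = (false, i + 1) ∨ w = (false, i - 1) ∨ w = (true, i) := by
  obtain ⟨s, j⟩ := w
  have hsub : i = j + 1 ↔ j = i - 1 := ⟨fun h => by rw [h]; ring, fun h => by rw [h]; ring⟩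
  cases s <;> simp [GP, Prod.ext_iff]
  rw [hsub]
  constructor
  · rintro ⟨-, h⟩; exact h
  · rintro (h | h) <;> subst h
    · exact ⟨fun hh => d1 hh.symm, Or.inl rfl⟩
    · exact ⟨fun hh => d2 hh.symm, Or.inr rfl⟩

/-- Neighbors of an inner vertex `bᵢ` in `GP n 3`. -/
lemma adj_true {n : ℕ} (i : ZMod n) (d1 : i + 3 ≠ i) (d2 : i - 3 ≠ i) (w : Bool × ZMod n) :
    (GP n 3).Adj (true, i) w ↔ w = (true, i + 3) ∨ w = (true, i - 3) ∨ w = (false, i) := by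
  obtain ⟨s, j⟩ := w
  have hsub : i = j + 3 ↔ j = i - 3 := ⟨fun h => by rw [h]; ring, fun h => by rw [h]; ring⟩
  cases s <;> simp [GP, Prod.ext_iff]
  · exact eq_comm
  rw [hsub]
  constructor
  · rintro ⟨-, h⟩; exact h
  · rintro (h | h) <;> subst h
    · exact ⟨fun hh => d1 hh.symm, Or.inl rfl⟩
    · exact ⟨fun hh => d2 hh.symm, Or.inr rfl⟩

theorem stmt_7 (n : ℕ) (hn : 8 ≤ n) (hdvd : 4 ∣ n) :
    IsPerfectColoring (GP n 3)
      (fun v =>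
        if (v.1 = false ∧ v.2.val % 4 = 0) ∨ (v.1 = true ∧ v.2.val % 4 = 2) then 0 else 1)
      !![0, 3; 1, 2] := by
  haveI : NeZero n := ⟨by omega⟩
  constructor
  · intro j
    fin_cases j
    · exact ⟨(false, 0), by simp⟩
    · exact ⟨(true, 0), by simp⟩
  rintro ⟨s, i⟩ j
  have hrlt : i.val % 4 < 4 := Nat.mod_lt _ (by norm_num)
  have h1 : (i + 1).val % 4 = (i.val + 1) % 4 := by
    have := zmod_shift n hdvd i 1; simpa using this
  have h3 : (i + 3).val % 4 = (i.val + 3) % 4 := by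
    have := zmod_shift n hdvd i 3; simpa using this
  have hm1 : (i - 1).val % 4 = (i.val + 3) % 4 := by
    have := zmod_shift n hdvd (i - 1) 1
    rw [show ((1:ℕ):ZMod n) = 1 by push_cast; ring, sub_add_cancel] at this
    omega
  have hm3 : (i - 3).val % 4 = (i.val + 1) % 4 := by
    have := zmod_shift n hdvd (i - 3) 3
    rw [show ((3:ℕ):ZMod n) = 3 by push_cast; ring, sub_add_cancel] at this
    omega
  have d1 : i + 1 ≠ i := fun h => by rw [h] at h1; omega
  have d2 : i - 1 ≠ i := fun h => by rw [h] at hm1; omega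
  have d3 : i + 3 ≠ i := fun h => by rw [h] at h3; omega
  have d4 : i - 3 ≠ i := fun h => by rw [h] at hm3; omega
  have dd1 : i + 1 ≠ i - 1 := fun h => by rw [h] at h1; omega
  have dd3 : i + 3 ≠ i - 3 := fun h => by rw [h] at h3; omega
  have hr4 : i.val % 4 = 0 ∨ i.val % 4 = 1 ∨ i.val % 4 = 2 ∨ i.val % 4 = 3 := by omega
  cases s
  · refine (count3 _ _ (false, i + 1) (false, i - 1) (true, i)
      (adj_false i d1 d2) (by simp [dd1]) (by simp) (by simp) j).trans ?_
    rcases hr4 with hr | hr | hr | hr <;>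
      · have e1 : (i.val + 1) % 4 = (i.val % 4 + 1) % 4 := by omega
        have e3 : (i.val + 3) % 4 = (i.val % 4 + 3) % 4 := by omega
        fin_cases j <;>
          simp [h1, hm1, e1, e3, hr, Matrix.cons_val_zero, Matrix.cons_val_one, Matrix.head_cons]
  · refine (count3 _ _ (true, i + 3) (true, i - 3) (false, i)
      (adj_true i d3 d4) (by simp [dd3]) (by simp) (by simp) j).trans ?_
    rcases hr4 with hr | hr | hr | hr <;>
      · have e1 : (i.val + 1) % 4 = (i.val % 4 + 1) % 4 := by omega
        have e3 : (i.val + 3) % 4 = (i.val % 4 + 3) % 4 := by omega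
        fin_cases j <;>
          simp [h3, hm3, e1, e3, hr, Matrix.cons_val_zero, Matrix.cons_val_one, Matrix.head_cons]
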